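/- arXiv:2109.03361 — 3 statements merged into one kernel-verified Lean document; each statement's English description precedes it below -/
import Mathlib

section
/- Let $\theta>0$, $c>0$, $A>0$, and in the setting of the previous statement let $T_A=\inf\{n\ge1:R_n>A\}$ and $\tau_{A+c}=\inf\{t\ge0:Y_t>A+c\}$. Assuming $T_A<\infty$, one has $T_A=1+N_{\tau_{A+c}}$. -/
/-- the CUSUM alarm time equals one plus the number of jumps before the
reflected process first exceeds `A + c`: `T_A = 1 + N (τ_{A+c})`. -/
theorem alarm_time_eq_one_add_jumps (θ c A : ℝ) (hθ : 0 < θ) (hc : 0 < c) (hA : 0 < A)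
    (ζ : ℕ → ℝ) (hζ : ∀ i, 1 ≤ i → 0 < ζ i)
    (η : ℕ → ℝ) (hη : ∀ n, η n = ∑ i ∈ Finset.Icc 1 n, ζ i)
    (N : ℝ → ℕ) (hN : ∀ t, N t = Set.ncard {k : ℕ | 1 ≤ k ∧ η k ≤ t})
    (X : ℝ → ℝ) (hX : ∀ t, X t = θ * t - c * N t)
    (Y : ℝ → ℝ) (hY : ∀ t, Y t = X t - min (sInf (X '' Set.Icc 0 t)) 0)
    (R : ℕ → ℝ) (hR0 : R 0 = 0)
    (hR : ∀ n (hn : 1 ≤ n),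
      R n = (Finset.Icc 1 n).sup' (Finset.nonempty_Icc.mpr hn)
        (fun k => ∑ i ∈ Finset.Icc k n, (θ * ζ i - c)))
    (hTfin : ∃ n, 1 ≤ n ∧ A < R n) :
    sInf {n : ℕ | 1 ≤ n ∧ A < R n}
      = 1 + N (sInf {t : ℝ | 0 ≤ t ∧ A + c < Y t}) := by
  classical
  -- basic facts about η
  have hη0 : η 0 = 0 := by rw [hη]; simp
  have hηs : ∀ n : ℕ, η (n + 1) = η n + ζ (n + 1) := by
    intro n
    rw [hη, hη, Finset.sum_Icc_succ_top (Nat.one_le_iff_ne_zero.mpr (Nat.succ_ne_zero n))]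
  have hmono : StrictMono η := by
    apply strictMono_nat_of_lt_succ
    intro n
    have := hζ (n + 1) (Nat.le_add_left 1 n)
    rw [hηs n]; linarith
  have hηnonneg : ∀ j, 0 ≤ η j := fun j => hη0 ▸ hmono.monotone (Nat.zero_le j)
  -- S and M
  set S : ℕ → ℝ := fun j => θ * η j - c * j with hS
  set M : ℕ → ℝ := fun j => (Finset.range (j + 1)).inf' (by simp) S with hM
  have hS0 : S 0 = 0 := by simp [hS, hη0]
  have hMle : ∀ j k, k ≤ j → M j ≤ S k := fun j k hk =>
    Finset.inf'_le _ (Finset.mem_range.mpr (Nat.lt_succ_of_le hk))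
  have hM0 : ∀ j, M j ≤ 0 := fun j => hS0 ▸ hMle j 0 (Nat.zero_le j)
  have hMmem : ∀ j, ∃ k ≤ j, M j = S k := by
    intro j
    obtain ⟨k, hk, hk2⟩ := Finset.exists_mem_eq_inf' (s := Finset.range (j + 1)) (by simp) S
    exact ⟨k, Nat.lt_succ_iff.mp (Finset.mem_range.mp hk), hk2⟩
  have hMrec : ∀ j, M (j + 1) = min (S (j + 1)) (M j) := by
    intro j
    apply le_antisymm
    · obtain ⟨k, hk, hkeq⟩ := hMmem j
      exact le_min (hMle (j + 1) (j + 1) le_rfl) (hkeq ▸ hMle (j + 1) k (by omega))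
    · obtain ⟨k, hk, hkeq⟩ := hMmem (j + 1)
      rcases Nat.eq_or_lt_of_le hk with h | h
      · rw [hkeq, h]; exact min_le_left _ _
      · rw [hkeq]
        exact le_trans (min_le_right _ _) (hMle j k (by omega))
  -- value of N
  have hNval : ∀ (j : ℕ) (t : ℝ), η j ≤ t → t < η (j + 1) → N t = j := by
    intro j t h1 h2
    rw [hN]
    have hset : {k : ℕ | 1 ≤ k ∧ η k ≤ t} = Set.Icc 1 j := by
      ext k
      simp only [Set.mem_setOf_eq, Set.mem_Icc]
      constructor
      · rintro ⟨hk1, hk2⟩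
        exact ⟨hk1, Nat.lt_succ_iff.mp (hmono.lt_iff_lt.mp (lt_of_le_of_lt hk2 h2))⟩
      · rintro ⟨hk1, hk2⟩
        exact ⟨hk1, le_trans (hmono.monotone hk2) h1⟩
    rw [hset, ← Finset.coe_Icc, Set.ncard_coe_finset, Nat.card_Icc]
    omega
  -- localization
  have hfind : ∀ (m : ℕ) (s : ℝ), 0 ≤ s → s < η (m + 1) →
      ∃ j, j ≤ m ∧ η j ≤ s ∧ s < η (j + 1) := by
    intro m
    induction m with
    | zero => intro s h0 h1; exact ⟨0, le_refl 0, hη0 ▸ h0, h1⟩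
    | succ m ih =>
      intro s h0 h1
      by_cases h : s < η (m + 1)
      · obtain ⟨j, hj, h2, h3⟩ := ih s h0 h
        exact ⟨j, Nat.le_succ_of_le hj, h2, h3⟩
      · exact ⟨m + 1, le_refl _, not_lt.mp h, h1⟩
  -- value of Y on an inter-jump interval
  have hYval : ∀ (j : ℕ) (t : ℝ), η j ≤ t → t < η (j + 1) →
      Y t = θ * t - c * j - M j := by
    intro j t h1 h2
    have hlow : ∀ x ∈ X '' Set.Icc 0 t, M j ≤ x := by
      rintro x ⟨s, hs, rfl⟩
      obtain ⟨hs0, hst⟩ := hs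
      obtain ⟨i, hi, hi1, hi2⟩ := hfind j s hs0 (lt_of_le_of_lt hst h2)
      rw [hX, hNval i s hi1 hi2]
      have h3 : M j ≤ S i := hMle j i hi
      have h4 : θ * η i ≤ θ * s := mul_le_mul_of_nonneg_left hi1 hθ.le
      simp only [hS] at h3
      linarith
    have hmem : ∀ k ≤ j, S k ∈ X '' Set.Icc 0 t := by
      intro k hk
      refine ⟨η k, ⟨hηnonneg k, le_trans (hmono.monotone hk) h1⟩, ?_⟩
      rw [hX, hNval k (η k) le_rfl (hmono (Nat.lt_succ_self k))]
    have hinf : sInf (X '' Set.Icc 0 t) = M j := by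
      obtain ⟨k, hk, hkeq⟩ := hMmem j
      apply le_antisymm
      · rw [hkeq]; exact csInf_le ⟨M j, hlow⟩ (hmem k hk)
      · exact le_csInf ⟨S k, hmem k hk⟩ hlow
    rw [hY, hinf, min_eq_left (hM0 j), hX, hNval j t h1 h2]
  -- partial sums of ζ
  have hsumζ : ∀ (m n : ℕ), m ≤ n → ∑ i ∈ Finset.Icc (m + 1) n, ζ i = η n - η m := by
    intro m n hmn
    have h1 := Finset.sum_Ico_consecutive ζ (Nat.le_add_left 1 m) (Nat.succ_le_succ hmn)
    simp only [Nat.succ_eq_add_one, Finset.Ico_add_one_right_eq_Icc] at h1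
    rw [hη n, hη m, ← h1]
    ring
  -- closed form for R
  have hRS : ∀ n, 1 ≤ n → R n = S n - M (n - 1) := by
    intro n hn
    obtain ⟨p, rfl⟩ : ∃ p, n = p + 1 := ⟨n - 1, by omega⟩
    rw [hR (p + 1) hn]
    have hterm : ∀ k ∈ Finset.Icc 1 (p + 1),
        ∑ i ∈ Finset.Icc k (p + 1), (θ * ζ i - c) = S (p + 1) - S (k - 1) := by
      intro k hk
      rw [Finset.mem_Icc] at hk
      obtain ⟨m, rfl⟩ : ∃ m, k = m + 1 := ⟨k - 1, by omega⟩
      have hmp : m ≤ p := by omega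
      have hcard : (Finset.Icc (m + 1) (p + 1)).card = p - m + 1 := by
        rw [Nat.card_Icc]; omega
      rw [Finset.sum_sub_distrib, ← Finset.mul_sum, hsumζ m (p + 1) (by omega),
        Finset.sum_const, hcard, nsmul_eq_mul]
      have hcast : ((p - m + 1 : ℕ) : ℝ) = (p : ℝ) - (m : ℝ) + 1 := by
        rw [Nat.cast_add, Nat.cast_sub hmp, Nat.cast_one]
      rw [hcast]
      simp only [hS, Nat.add_sub_cancel]
      push_cast
      ring
    simp only [Nat.add_sub_cancel]
    apply le_antisymm
    · apply Finset.sup'_le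
      intro k hk
      rw [hterm k hk]
      have hk' := Finset.mem_Icc.mp hk
      have h5 : M p ≤ S (k - 1) := hMle p (k - 1) (by omega)
      linarith
    · obtain ⟨k, hk, hkeq⟩ := hMmem p
      have h1 : S (p + 1) - M p = ∑ i ∈ Finset.Icc (k + 1) (p + 1), (θ * ζ i - c) := by
        rw [hterm (k + 1) (Finset.mem_Icc.mpr ⟨by omega, by omega⟩), hkeq]
        simp
      have hmem2 : k + 1 ∈ Finset.Icc 1 (p + 1) := Finset.mem_Icc.mpr ⟨by omega, by omega⟩
      rw [h1]
      exact Finset.le_sup' (f := fun k => ∑ i ∈ Finset.Icc k (p + 1), (θ * ζ i - c)) hmem2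
  -- the alarm time
  set T : Set ℕ := {n : ℕ | 1 ≤ n ∧ A < R n} with hT
  have hTne : T.Nonempty := hTfin
  have hmemT := Nat.sInf_mem hTne
  obtain ⟨hn1, hnR⟩ : 1 ≤ sInf T ∧ A < R (sInf T) := hmemT
  obtain ⟨p, hp⟩ : ∃ p, sInf T = p + 1 := ⟨sInf T - 1, by omega⟩
  have hminim : ∀ m, 1 ≤ m → m ≤ p → R m ≤ A := by
    intro m hm1 hm2
    have := Nat.notMem_of_lt_sInf (s := T) (by omega : m < sInf T)
    simp only [hT, Set.mem_setOf_eq, not_and, not_lt] at this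
    exact this hm1
  have hRn : A < S (p + 1) - M p := by
    have := hRS (sInf T) hn1
    rw [hp] at this hnR
    simpa only [Nat.add_sub_cancel, this] using hnR
  have hM00 : M 0 = 0 := by
    rw [hM]
    simp [hS0]
  have hbound : ∀ j, j ≤ p → S j - M j ≤ A := by
    intro j hj
    match j with
    | 0 => rw [hS0, hM00]; linarith
    | q + 1 =>
      have hR' : R (q + 1) ≤ A := hminim (q + 1) (by omega) hj
      rw [hRS (q + 1) (by omega)] at hR'
      simp only [Nat.add_sub_cancel] at hR'
      rw [hMrec q]
      rcases le_total (S (q + 1)) (M q) with h | h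
      · rw [min_eq_left h]; linarith
      · rw [min_eq_right h]; linarith
  -- the crossing time
  set t₀ : ℝ := (A + c + c * p + M p) / θ with ht₀
  have htθ : θ * t₀ = A + c + c * p + M p := by
    rw [ht₀, mul_div_cancel₀ _ hθ.ne']
  have hθηp : θ * η p = S p + c * p := by simp only [hS]; ring
  have hθηp1 : θ * η (p + 1) = S (p + 1) + c * p + c := by
    simp only [hS]; push_cast; ring
  have hts1 : η p < t₀ := by
    have hb := hbound p le_rfl
    have : θ * η p < θ * t₀ := by rw [htθ, hθηp]; linarith
    exact lt_of_mul_lt_mul_left this hθ.le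
  have hts2 : t₀ < η (p + 1) := by
    have : θ * t₀ < θ * η (p + 1) := by rw [htθ, hθηp1]; linarith
    exact lt_of_mul_lt_mul_left this hθ.le
  have ht₀0 : 0 ≤ t₀ := le_trans (hηnonneg p) hts1.le
  -- Y below the crossing time
  have hYle : ∀ t : ℝ, 0 ≤ t → t ≤ t₀ → Y t ≤ A + c := by
    intro t h0 h1
    obtain ⟨j, hj, hj1, hj2⟩ := hfind p t h0 (lt_of_le_of_lt h1 hts2)
    rw [hYval j t hj1 hj2]
    rcases eq_or_lt_of_le hj with rfl | hjp
    · have : θ * t ≤ θ * t₀ := mul_le_mul_of_nonneg_left h1 hθ.le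
      rw [htθ] at this
      linarith
    · have hR' : R (j + 1) ≤ A := hminim (j + 1) (by omega) (by omega)
      rw [hRS (j + 1) (by omega)] at hR'
      simp only [Nat.add_sub_cancel] at hR'
      have h2 : θ * t < θ * η (j + 1) := mul_lt_mul_of_pos_left hj2 hθ
      have h3 : θ * η (j + 1) = S (j + 1) + c * j + c := by
        simp only [hS]; push_cast; ring
      linarith
  -- Y above the crossing time
  have hYgt : ∀ t : ℝ, t₀ < t → t < η (p + 1) → A + c < Y t := by
    intro t h1 h2
    rw [hYval p t (le_trans hts1.le h1.le) h2]
    have : θ * t₀ < θ * t := mul_lt_mul_of_pos_left h1 hθ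
    rw [htθ] at this
    linarith
  set Sτ : Set ℝ := {t : ℝ | 0 ≤ t ∧ A + c < Y t} with hSτ
  have hlb : ∀ t ∈ Sτ, t₀ ≤ t := by
    rintro t ⟨h0, h1⟩
    by_contra h
    exact absurd h1 (not_lt.mpr (hYle t h0 (not_le.mp h).le))
  have hub : ∀ t : ℝ, t₀ < t → t < η (p + 1) → sInf Sτ ≤ t := by
    intro t h1 h2
    exact csInf_le ⟨t₀, hlb⟩ ⟨le_trans ht₀0 h1.le, hYgt t h1 h2⟩
  have hSτne : Sτ.Nonempty := by
    refine ⟨(t₀ + η (p + 1)) / 2, le_trans ht₀0 (by linarith), hYgt _ (by linarith) (by linarith)⟩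
  have hτeq : sInf Sτ = t₀ := by
    apply le_antisymm
    · by_contra h
      push_neg at h
      set t₁ := (t₀ + min (sInf Sτ) (η (p + 1))) / 2 with ht₁
      have hm : t₀ < min (sInf Sτ) (η (p + 1)) := lt_min h hts2
      have h1 : t₀ < t₁ := by rw [ht₁]; linarith
      have h2 : t₁ < min (sInf Sτ) (η (p + 1)) := by rw [ht₁]; linarith
      have h3 : t₁ < η (p + 1) := lt_of_lt_of_le h2 (min_le_right _ _)
      have h4 : t₁ < sInf Sτ := lt_of_lt_of_le h2 (min_le_left _ _)
      exact absurd (hub t₁ h1 h3) (not_le.mpr h4)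
    · exact le_csInf hSτne hlb
  rw [hτeq, hNval p t₀ hts1.le hts2, hp]
  omega
end

section
/- Let $T,B$ be $\mathfrak n\times\mathfrak n$ matrices, $\gamma>0$, $c>0$, and define $W(x)=\gamma^{-1}\sum_{k=1}^{\lfloor x/c\rfloor+1}e_{k1}^\top e^{T_k(c(k-1)-x)/\gamma}e_{kk}$ for $x\ge0$, where $T_k$ is the block bidiagonal matrix with $T$ on the diagonal blocks and $B$ on the superdiagonal blocks. Then $W$ is right-differentiable on $(0,\infty)$ with right derivative $W'_+(x)=-\gamma^{-2}\sum_{k=1}^{\lfloor x/c\rfloor+1}e_{k1}^\top T_k e^{T_k(c(k-1)-x)/\gamma}e_{kk}$. -/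
section LinftyAux

open NormedSpace

attribute [local instance] Matrix.linftyOpNormedRing Matrix.linftyOpNormedAlgebra

/-- Auxiliary: the derivative of an entry of `exp(((r - y)/γ) • A)` in `y`. -/
theorem exp_entry_hasDerivAt {m : Type*} [Fintype m] [DecidableEq m] (A : Matrix m m ℝ)
    (r γ : ℝ) (x : ℝ) (p q : m) :
    HasDerivAt (fun y : ℝ => NormedSpace.exp (((r - y) / γ) • A) p q)
      (-γ⁻¹ * ((A * NormedSpace.exp (((r - x) / γ) • A)) p q)) x := by
  have h1 : HasDerivAt (fun u : ℝ => NormedSpace.exp (u • A))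
      (A * NormedSpace.exp (((r - x) / γ) • A))
      ((r - x) / γ) := hasDerivAt_exp_smul_const' A ((r - x) / γ)
  have h2 : HasDerivAt (fun y : ℝ => (r - y) / γ) (-γ⁻¹) x := by
    simpa [neg_div, one_div] using ((hasDerivAt_id x).const_sub r).div_const γ
  have h3 : HasDerivAt (fun y : ℝ => NormedSpace.exp (((r - y) / γ) • A))
      ((-γ⁻¹) • (A * NormedSpace.exp (((r - x) / γ) • A))) x := h1.scomp_of_eq x h2 rfl
  let ℓ : Matrix m m ℝ →ₗ[ℝ] ℝ :=
    (LinearMap.proj (R := ℝ) (φ := fun _ : m => ℝ) q).comp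
      (LinearMap.proj (R := ℝ) (φ := fun _ : m => m → ℝ) p)
  have h4 := (ℓ.toContinuousLinearMap.hasFDerivAt).comp_hasDerivAt x h3
  exact h4

end LinftyAux

attribute [local instance] Matrix.normedAddCommGroup Matrix.normedSpace

/-- Auxiliary: a matrix-valued function is differentiable if all its entries are. -/
theorem hasDerivAt_matrix {I J : Type*} [Fintype I] [Fintype J] {f : ℝ → Matrix I J ℝ}
    {f' : Matrix I J ℝ} {x : ℝ}
    (h : ∀ i j, HasDerivAt (fun y => f y i j) (f' i j) x) : HasDerivAt f f' x := by
  rw [hasDerivAt_iff_hasFDerivAt]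
  apply hasFDerivAt_pi''
  intro i
  apply hasFDerivAt_pi''
  intro j
  exact (hasDerivAt_iff_hasFDerivAt.1 (h i j))

/-- The block upper-bidiagonal matrix with `T` on the block diagonal and `B` on the first
block superdiagonal, with `k` diagonal blocks. -/
def blockBidiag {n : ℕ} (T B : Matrix (Fin n) (Fin n) ℝ) (k : ℕ) :
    Matrix (Fin k × Fin n) (Fin k × Fin n) ℝ := fun p q =>
  if p.1 = q.1 then T p.2 q.2
  else if (q.1 : ℕ) = (p.1 : ℕ) + 1 then B p.2 q.2 else 0

/-- The scale matrix with deterministic jumps of size `c`: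
`W(x) = γ⁻¹ ∑_{k=1}^{⌊x/c⌋+1} e_{k1}ᵀ e^{T_k (c(k-1)-x)/γ} e_{kk}` (here the index `k`
of the sum is shifted by one, so it runs over `0, …, ⌊x/c⌋`). -/
noncomputable def scaleW {n : ℕ} (T B : Matrix (Fin (n + 1)) (Fin (n + 1)) ℝ)
    (γ c : ℝ) (x : ℝ) : Matrix (Fin (n + 1)) (Fin (n + 1)) ℝ :=
  γ⁻¹ • ∑ k ∈ Finset.range (Nat.floor (x / c) + 1),
    Matrix.of fun a b =>
      (NormedSpace.exp (((c * k - x) / γ) • blockBidiag T B (k + 1)))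
        (0, a) (Fin.last k, b)

/-- The claimed right derivative
`W'_+(x) = -γ⁻² ∑_{k=1}^{⌊x/c⌋+1} e_{k1}ᵀ T_k e^{T_k (c(k-1)-x)/γ} e_{kk}`. -/
noncomputable def scaleW' {n : ℕ} (T B : Matrix (Fin (n + 1)) (Fin (n + 1)) ℝ)
    (γ c : ℝ) (x : ℝ) : Matrix (Fin (n + 1)) (Fin (n + 1)) ℝ :=
  (-(γ ^ 2)⁻¹) • ∑ k ∈ Finset.range (Nat.floor (x / c) + 1),
    Matrix.of fun a b =>
      ((blockBidiag T B (k + 1)) *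
        NormedSpace.exp (((c * k - x) / γ) • blockBidiag T B (k + 1)))
        (0, a) (Fin.last k, b)

/-- the scale matrix with deterministic jumps is right-differentiable on
`(0,∞)` with right derivative `scaleW'`. -/
theorem scaleW_hasRightDeriv {n : ℕ} (T B : Matrix (Fin (n + 1)) (Fin (n + 1)) ℝ)
    (γ c : ℝ) (hγ : 0 < γ) (hc : 0 < c) :
    ∀ x : ℝ, 0 < x →
      HasDerivWithinAt (scaleW T B γ c) (scaleW' T B γ c x) (Set.Ici x) x := by
  intro x hx
  set m : ℕ := Nat.floor (x / c) with hm
  set F : ℝ → Matrix (Fin (n + 1)) (Fin (n + 1)) ℝ := fun y =>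
    γ⁻¹ • ∑ k ∈ Finset.range (m + 1),
      Matrix.of fun a b =>
        (NormedSpace.exp (((c * k - y) / γ) • blockBidiag T B (k + 1)))
          (0, a) (Fin.last k, b) with hF
  -- `F` is differentiable with derivative `scaleW' T B γ c x`
  have hder : HasDerivAt F (scaleW' T B γ c x) x := by
    have hsum : HasDerivAt (fun y => ∑ k ∈ Finset.range (m + 1),
        Matrix.of fun a b =>
          (NormedSpace.exp (((c * k - y) / γ) • blockBidiag T B (k + 1)))
            (0, a) (Fin.last k, b))
        (∑ k ∈ Finset.range (m + 1),
          Matrix.of fun a b => -γ⁻¹ *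
            ((blockBidiag T B (k + 1) *
              NormedSpace.exp (((c * k - x) / γ) • blockBidiag T B (k + 1)))
              (0, a) (Fin.last k, b))) x := by
      apply HasDerivAt.fun_sum
      intro k _
      apply hasDerivAt_matrix
      intro a b
      exact exp_entry_hasDerivAt (blockBidiag T B (k + 1)) (c * k) γ x (0, a) (Fin.last k, b)
    have := hsum.const_smul γ⁻¹
    refine this.congr_deriv ?_
    ext a b
    simp only [scaleW', Matrix.smul_apply, Matrix.sum_apply, Matrix.of_apply, smul_eq_mul,
      Finset.mul_sum, ← hm]
    apply Finset.sum_congr rfl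
    intro k _
    rw [sq, mul_inv]
    ring
  -- the floor is locally constant to the right of `x`
  have hfloor : ∀ y : ℝ, x ≤ y → y < c * (m + 1) → Nat.floor (y / c) = m := by
    intro y hxy hyc
    have hy0 : (0:ℝ) ≤ y := le_of_lt (lt_of_lt_of_le hx hxy)
    have h0 : (m : ℝ) ≤ y / c := le_trans (Nat.floor_le (div_nonneg hx.le hc.le)) (by gcongr)
    have h1 : y / c < m + 1 := by
      rw [div_lt_iff₀ hc]
      linarith [hyc]
    rw [Nat.floor_eq_iff (div_nonneg hy0 hc.le)]
    exact ⟨by exact_mod_cast h0, by exact_mod_cast h1⟩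
  have hlt : x < c * (m + 1) := by
    have := Nat.lt_floor_add_one (x / c)
    rw [div_lt_iff₀ hc] at this
    linarith [this]
  have hev : scaleW T B γ c =ᶠ[nhdsWithin x (Set.Ici x)] F := by
    filter_upwards [nhdsWithin_le_nhds (Iio_mem_nhds hlt), self_mem_nhdsWithin] with y hy1 hy2
    simp only [scaleW, hF]
    rw [hfloor y hy2 hy1]
  exact (hder.hasDerivWithinAt).congr_of_eventuallyEq hev (by simp only [scaleW, hF, hm])
end

section
/- In the setting of the previous statement, for $x\ge0$ and $T$ invertible on each block (i.e., each $T_k$ invertible), the integral $\overline W(x)=\int_0^xW(z)\,dz$ equals $\sum_{k=1}^{\lfloor x/c\rfloor+1}e_{k1}^\top T_k^{-1}\big(I_{\mathfrak nk}-e^{T_k(c(k-1)-x)/\gamma}\big)e_{kk}$. -/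
section LinftyAux

attribute [local instance] Matrix.linftyOpNormedRing Matrix.linftyOpNormedAlgebra

open NormedSpace

theorem auxEntryMul_hasDerivAt {ι : Type*} [Fintype ι] [DecidableEq ι]
    (C A : Matrix ι ι ℝ) (i j : ι) (t : ℝ) :
    HasDerivAt (fun u : ℝ => (C * exp (u • A)) i j)
      ((C * (exp (t • A) * A)) i j) t := by
  have h := hasDerivAt_exp_smul_const (𝕂 := ℝ) A t
  let l : Matrix ι ι ℝ →ₗ[ℝ] ℝ :=
    { toFun := fun M => (C * M) i j
      map_add' := by intro M N; simp [Matrix.mul_add]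
      map_smul' := by intro r M; simp [Matrix.mul_smul] }
  have h2 := (l.toContinuousLinearMap.hasFDerivAt (x := exp (t • A))).comp_hasDerivAt t h
  exact h2

theorem auxExp_comm {ι : Type*} [Fintype ι] [DecidableEq ι]
    (A : Matrix ι ι ℝ) (s : ℝ) :
    exp (s • A) * A = A * exp (s • A) :=
  (((Commute.refl A).smul_left s).exp_left)

theorem auxExp_zero_smul {ι : Type*} [Fintype ι] [DecidableEq ι] (A : Matrix ι ι ℝ) :
    exp ((0 : ℝ) • A) = 1 := by
  simp [exp_zero]

end LinftyAux

attribute [local instance] Matrix.normedAddCommGroup Matrix.normedSpace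

namespace ScaleWAux

variable {n : ℕ} (T B : Matrix (Fin (n + 1)) (Fin (n + 1)) ℝ) (γ c : ℝ)

/-- Summand of `scaleW`. -/
noncomputable def Em (k : ℕ) (x : ℝ) : Matrix (Fin (n + 1)) (Fin (n + 1)) ℝ :=
  Matrix.of fun a b =>
    (NormedSpace.exp (((c * k - x) / γ) • blockBidiag T B (k + 1))) (0, a) (Fin.last k, b)

/-- Summand of the claimed antiderivative. -/
noncomputable def Gm (k : ℕ) (x : ℝ) : Matrix (Fin (n + 1)) (Fin (n + 1)) ℝ :=
  Matrix.of fun a b =>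
    ((blockBidiag T B (k + 1))⁻¹ *
      (1 - NormedSpace.exp (((c * k - x) / γ) • blockBidiag T B (k + 1))))
      (0, a) (Fin.last k, b)

noncomputable def Fm (m : ℕ) (x : ℝ) : Matrix (Fin (n + 1)) (Fin (n + 1)) ℝ :=
  ∑ k ∈ Finset.range (m + 1), Gm T B γ c k x

noncomputable def Vm (m : ℕ) (x : ℝ) : Matrix (Fin (n + 1)) (Fin (n + 1)) ℝ :=
  γ⁻¹ • ∑ k ∈ Finset.range (m + 1), Em T B γ c k x

lemma inner_hasDerivAt (k : ℕ) (x : ℝ) :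
    HasDerivAt (fun x : ℝ => (c * k - x) / γ) (-γ⁻¹) x := by
  have h := ((hasDerivAt_id x).const_sub (c * k)).div_const γ
  simpa [neg_div, one_div] using h

lemma E_entry_hasDerivAt (k : ℕ) (a b : Fin (n + 1)) (x : ℝ) :
    HasDerivAt (fun x => Em T B γ c k x a b)
      (-γ⁻¹ *
        ((NormedSpace.exp (((c * k - x) / γ) • blockBidiag T B (k + 1)) *
          blockBidiag T B (k + 1)) (0, a) (Fin.last k, b))) x := by
  have h1 := auxEntryMul_hasDerivAt 1 (blockBidiag T B (k + 1)) (0, a) (Fin.last k, b)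
    ((c * k - x) / γ)
  simp only [one_mul] at h1
  have h2 := HasDerivAt.comp x h1 (inner_hasDerivAt γ c k x)
  rw [mul_comm _ (-γ⁻¹)] at h2
  exact h2

lemma E_entry_continuous (k : ℕ) (a b : Fin (n + 1)) :
    Continuous (fun x => Em T B γ c k x a b) :=
  continuous_iff_continuousAt.mpr fun x => (E_entry_hasDerivAt T B γ c k a b x).continuousAt

lemma E_continuous (k : ℕ) : Continuous (fun x => Em T B γ c k x) := by
  apply continuous_pi; intro a; exact continuous_pi (E_entry_continuous T B γ c k a)

lemma V_continuous (m : ℕ) : Continuous (Vm T B γ c m) := by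
  unfold Vm
  exact (continuous_finset_sum _ fun k _ => E_continuous T B γ c k).const_smul γ⁻¹

lemma G_entry_hasDerivAt (hinv : ∀ k : ℕ, IsUnit (blockBidiag T B (k + 1)))
    (k : ℕ) (a b : Fin (n + 1)) (x : ℝ) :
    HasDerivAt (fun x => Gm T B γ c k x a b) (γ⁻¹ * Em T B γ c k x a b) x := by
  set A := blockBidiag T B (k + 1) with hA
  have h1 := auxEntryMul_hasDerivAt A⁻¹ A (0, a) (Fin.last k, b) ((c * k - x) / γ)
  have h2 := HasDerivAt.comp x h1 (inner_hasDerivAt γ c k x)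
  have h3 := h2.const_sub (A⁻¹ (0, a) (Fin.last k, b))
  have hfun : (fun x => Gm T B γ c k x a b)
      = fun x => A⁻¹ (0, a) (Fin.last k, b)
        - ((fun u => (A⁻¹ * NormedSpace.exp (u • A)) (0, a) (Fin.last k, b)) ∘
            fun x : ℝ => (c * k - x) / γ) x := by
    funext y
    simp [Gm, Matrix.mul_sub, Matrix.mul_one, Matrix.sub_apply, Function.comp]
    rfl
  rw [← hfun] at h3
  have hval : -((A⁻¹ * (NormedSpace.exp (((c * k - x) / γ) • A) * A)) (0, a) (Fin.last k, b)
      * -γ⁻¹) = γ⁻¹ * Em T B γ c k x a b := by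
    rw [auxExp_comm, ← Matrix.mul_assoc, Matrix.nonsing_inv_mul A
      ((Matrix.isUnit_iff_isUnit_det A).mp (hinv k)), Matrix.one_mul]
    simp [Em]
    ring
  rw [hval] at h3
  exact h3

lemma F_hasDerivAt (hinv : ∀ k : ℕ, IsUnit (blockBidiag T B (k + 1))) (m : ℕ) (x : ℝ) :
    HasDerivAt (fun x => Fm T B γ c m x) (Vm T B γ c m x) x := by
  refine hasDerivAt_pi.mpr fun a => hasDerivAt_pi.mpr fun b => ?_
  have h := HasDerivAt.fun_sum (A := fun k (x : ℝ) => Gm T B γ c k x a b)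
    (A' := fun k => γ⁻¹ * Em T B γ c k x a b)
    (fun k (_ : k ∈ Finset.range (m + 1)) => G_entry_hasDerivAt T B γ c hinv k a b x)
  have hfun : (fun x => Fm T B γ c m x a b)
      = fun x => ∑ k ∈ Finset.range (m + 1), Gm T B γ c k x a b := by
    funext y; simp [Fm, Matrix.sum_apply]
  have hval : Vm T B γ c m x a b = ∑ k ∈ Finset.range (m + 1), γ⁻¹ * Em T B γ c k x a b := by
    simp [Vm, Matrix.sum_apply, Matrix.smul_apply, smul_eq_mul, Finset.mul_sum]
  rw [hfun, hval]
  exact h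

lemma scaleW_eq_Vm (hc : 0 < c) (m : ℕ) (z : ℝ) (h1 : c * m < z) (h2 : z < c * (m + 1)) :
    scaleW T B γ c z = Vm T B γ c m z := by
  have hz : 0 < z := lt_of_le_of_lt (by positivity) h1
  have hfl : Nat.floor (z / c) = m := by
    rw [Nat.floor_eq_iff (by positivity)]
    constructor
    · exact le_of_lt ((lt_div_iff₀ hc).mpr (by linarith))
    · exact (div_lt_iff₀ hc).mpr (by push_cast; linarith)
  simp only [scaleW, Vm, Em, hfl]

section NormedTop

attribute [-instance] instTopologicalSpaceMatrix Matrix.instUniformSpace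

lemma piece_integral (hinv : ∀ k : ℕ, IsUnit (blockBidiag T B (k + 1)))
    (hc : 0 < c) (m : ℕ) (a b : ℝ) (hab : a ≤ b) (h1 : c * m ≤ a) (h2 : b ≤ c * (m + 1)) :
    (∫ z in a..b, scaleW T B γ c z) = Fm T B γ c m b - Fm T B γ c m a := by
  have hb : ∀ᵐ z : ℝ, z ≠ b := by
    refine MeasureTheory.ae_iff.mpr ?_
    simp
  have hcongr : (∫ z in a..b, scaleW T B γ c z) = ∫ z in a..b, Vm T B γ c m z := by
    apply intervalIntegral.integral_congr_ae
    filter_upwards [hb] with z hz hmem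
    rw [Set.uIoc_of_le hab] at hmem
    exact scaleW_eq_Vm T B γ c hc m z (lt_of_le_of_lt h1 hmem.1)
      (lt_of_lt_of_le (lt_of_le_of_ne hmem.2 hz) h2)
  rw [hcongr]
  exact intervalIntegral.integral_eq_sub_of_hasDerivAt
    (fun t _ => F_hasDerivAt T B γ c hinv m t)
    ((V_continuous T B γ c m).intervalIntegrable a b)

lemma piece_integrable (hc : 0 < c) (m : ℕ) (a b : ℝ) (hab : a ≤ b)
    (h1 : c * m ≤ a) (h2 : b ≤ c * (m + 1)) :
    IntervalIntegrable (scaleW T B γ c) MeasureTheory.volume a b := by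
  have hb : ∀ᵐ z : ℝ, z ≠ b := by
    refine MeasureTheory.ae_iff.mpr ?_
    simp
  refine ((V_continuous T B γ c m).intervalIntegrable a b).congr_ae ?_
  filter_upwards [MeasureTheory.ae_restrict_mem measurableSet_uIoc,
    MeasureTheory.ae_restrict_of_ae hb] with z hmem hz
  rw [Set.uIoc_of_le hab] at hmem
  exact (scaleW_eq_Vm T B γ c hc m z (lt_of_le_of_lt h1 hmem.1)
    (lt_of_lt_of_le (lt_of_le_of_ne hmem.2 hz) h2)).symm

lemma G_self_zero (k : ℕ) : Gm T B γ c k (c * k) = 0 := by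
  ext a b
  simp [Gm, auxExp_zero_smul]

lemma integrable_upTo (hc : 0 < c) (m : ℕ) :
    IntervalIntegrable (scaleW T B γ c) MeasureTheory.volume 0 (c * m) := by
  induction m with
  | zero =>
      simp only [Nat.cast_zero, mul_zero]
      exact piece_integrable T B γ c hc 0 0 0 le_rfl (by simp) (by push_cast; nlinarith)
  | succ m ih =>
      refine ih.trans ?_
      have := piece_integrable T B γ c hc m (c * m) (c * (m + 1))
        (by nlinarith [hc.le]) le_rfl le_rfl
      push_cast
      push_cast at this
      exact this

end NormedTop

lemma upTo (hinv : ∀ k : ℕ, IsUnit (blockBidiag T B (k + 1))) (hc : 0 < c) (m : ℕ) :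
    (∫ z in (0 : ℝ)..(c * m), scaleW T B γ c z)
      = ∑ k ∈ Finset.range m, Gm T B γ c k (c * m) := by
  induction m with
  | zero => simp
  | succ m ih =>
      have hadj := intervalIntegral.integral_add_adjacent_intervals
        (integrable_upTo T B γ c hc m)
        (piece_integrable T B γ c hc m (c * m) (c * (m + 1))
          (by nlinarith [hc.le]) le_rfl le_rfl)
      have hpiece := piece_integral T B γ c hinv hc m (c * m) (c * (m + 1))
        (by nlinarith [hc.le]) le_rfl le_rfl
      have hcast : ((m : ℝ) + 1) = ((m + 1 : ℕ) : ℝ) := by push_cast; ring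
      rw [hcast] at hadj hpiece
      rw [← hadj, ih, hpiece]
      have hFm : Fm T B γ c m (c * m)
          = ∑ k ∈ Finset.range m, Gm T B γ c k (c * m) := by
        rw [Fm, Finset.sum_range_succ, G_self_zero, add_zero]
      have hFm2 : Fm T B γ c m (c * (m + 1 : ℕ))
          = ∑ k ∈ Finset.range (m + 1), Gm T B γ c k (c * (m + 1 : ℕ)) := rfl
      rw [hFm, hFm2]
      abel

end ScaleWAux

/-- the integrated scale matrix
`∫₀ˣ W(z) dz = ∑_{k=1}^{⌊x/c⌋+1} e_{k1}ᵀ T_k⁻¹ (I - e^{T_k(c(k-1)-x)/γ}) e_{kk}`,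
assuming each `T_k` is invertible. -/
theorem scaleW_integral {n : ℕ} (T B : Matrix (Fin (n + 1)) (Fin (n + 1)) ℝ)
    (γ c : ℝ) (hγ : 0 < γ) (hc : 0 < c)
    (hinv : ∀ k : ℕ, IsUnit (blockBidiag T B (k + 1))) :
    ∀ x : ℝ, 0 ≤ x →
      (∫ z in (0 : ℝ)..x, scaleW T B γ c z)
        = ∑ k ∈ Finset.range (Nat.floor (x / c) + 1),
            Matrix.of fun a b =>
              ((blockBidiag T B (k + 1))⁻¹ *
                (1 - NormedSpace.exp (((c * k - x) / γ) • blockBidiag T B (k + 1))))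
                (0, a) (Fin.last k, b) := by
  intro x hx
  open ScaleWAux in
  set m := Nat.floor (x / c) with hm
  have hx0 : (0 : ℝ) ≤ x / c := div_nonneg hx hc.le
  have h1 : c * m ≤ x := by
    rw [mul_comm]
    exact (le_div_iff₀ hc).mp (Nat.floor_le hx0)
  have h2 : x ≤ c * (m + 1) := by
    have := Nat.lt_floor_add_one (x / c)
    rw [mul_comm]
    exact le_of_lt ((div_lt_iff₀ hc).mp (by push_cast; push_cast at this; linarith))
  have hadj := intervalIntegral.integral_add_adjacent_intervals
    (ScaleWAux.integrable_upTo T B γ c hc m)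
    (ScaleWAux.piece_integrable T B γ c hc m (c * m) x h1 le_rfl h2)
  have hpiece := ScaleWAux.piece_integral T B γ c hinv hc m (c * m) x h1 le_rfl h2
  rw [← hadj, ScaleWAux.upTo T B γ c hinv hc m, hpiece]
  have hFm : ScaleWAux.Fm T B γ c m (c * m)
      = ∑ k ∈ Finset.range m, ScaleWAux.Gm T B γ c k (c * m) := by
    rw [ScaleWAux.Fm, Finset.sum_range_succ, ScaleWAux.G_self_zero, add_zero]
  have hFm2 : ScaleWAux.Fm T B γ c m x
      = ∑ k ∈ Finset.range (m + 1),
          (Matrix.of fun a b =>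
            ((blockBidiag T B (k + 1))⁻¹ *
              (1 - NormedSpace.exp (((c * k - x) / γ) • blockBidiag T B (k + 1))))
              (0, a) (Fin.last k, b)) := rfl
  rw [hFm, hFm2]
  abel
end
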